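/- The span-minimal rule computes the bounded affine permutation of the Grassmann necklace: π satisfies π(a+n) = π(a)+n and a ≤ π(a) ≤ a+n for all a ∈ ℤ; moreover, for every a ∈ ℤ, if a ∈ I→_a then, as k-element sets of residues modulo n, I→_{a+1} = (I→_a \ {a}) ∪ {π(a)}, while if a ∉ I→_a then π(a) = a and I→_{a+1} = I→_a. -/

import Mathlib

open scoped BigOperators

/-- The columns of `A` are `n`-periodic. -/
def ColPeriodic (k n : ℕ) (A : ℤ → Fin k → ℂ) : Prop :=
  ∀ a : ℤ, A (a + (n : ℤ)) = A a

/-- `A` has rank `k`, i.e. its columns span `ℂ^k`. -/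
def FullRank (k : ℕ) (A : ℤ → Fin k → ℂ) : Prop :=
  Submodule.span ℂ (Set.range A) = ⊤

/-- The Gale (componentwise) partial order on finite subsets of `ℤ` of equal
cardinality: `B ≼ C` iff they have the same cardinality and, for each `i`, the
`i`-th smallest element of `B` is at most the `i`-th smallest element of `C`
(equivalently, the counting condition below). -/
def galeLE (B C : Finset ℤ) : Prop :=
  B.card = C.card ∧
    ∀ t : ℤ, (B.filter fun x => t ≤ x).card ≤ (C.filter fun x => t ≤ x).card

/-- The columns of `A` indexed by `J` form a basis of `ℂ^k`. -/
def IsColBasis (k : ℕ) (A : ℤ → Fin k → ℂ) (J : Finset ℤ) : Prop :=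
  J.card = k ∧ LinearIndependent ℂ (fun j : (J : Set ℤ) => A (j : ℤ)) ∧
    Submodule.span ℂ (A '' (J : Set ℤ)) = ⊤

/-- `I` is the `≼_a`-minimal `k`-element subset of `{a, a+1, …, a+n-1}` whose
columns form a basis of `ℂ^k` (the `a`-minimal basis `I→_a`). -/
def IsMinBasis (k n : ℕ) (A : ℤ → Fin k → ℂ) (a : ℤ) (I : Finset ℤ) : Prop :=
  I ⊆ Finset.Ico a (a + (n : ℤ)) ∧ IsColBasis k A I ∧
    ∀ J : Finset ℤ, J ⊆ Finset.Ico a (a + (n : ℤ)) → IsColBasis k A J → galeLE I J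

/-- `I` is the `≼_{a+1}`-maximal `k`-element subset of `{a-n+1, …, a}` whose
columns form a basis of `ℂ^k` (the `a`-maximal basis `I←_a`).  Note that on
representatives in `{a-n+1, …, a}` the cyclic order `≺_{a+1}` agrees with the
usual order of `ℤ`. -/
def IsMaxBasis (k n : ℕ) (A : ℤ → Fin k → ℂ) (a : ℤ) (I : Finset ℤ) : Prop :=
  I ⊆ Finset.Ioc (a - (n : ℤ)) a ∧ IsColBasis k A I ∧
    ∀ J : Finset ℤ, J ⊆ Finset.Ioc (a - (n : ℤ)) a → IsColBasis k A J → galeLE J I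

/-- The standard symmetric bilinear form `⟨x|y⟩ = ∑ i, x i * y i` on `ℂ^k`. -/
noncomputable def bil (k : ℕ) (x y : Fin k → ℂ) : ℂ := ∑ i, x i * y i

/-- `π` is the bounded affine permutation of `A`:
`π a` is the least `r` with `a ≤ r ≤ a + n` and `A a ∈ span(A (a+1), …, A r)`. -/
def IsBAP (k n : ℕ) (A : ℤ → Fin k → ℂ) (π : ℤ → ℤ) : Prop :=
  ∀ a : ℤ,
    a ≤ π a ∧ π a ≤ a + (n : ℤ) ∧
    A a ∈ Submodule.span ℂ (A '' Set.Ioc a (π a)) ∧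
    ∀ r : ℤ, a ≤ r → r ≤ a + (n : ℤ) →
      A a ∈ Submodule.span ℂ (A '' Set.Ioc a r) → π a ≤ r

/-- `T` is the right twist `τ→(A)`: for each `a`, the column `T a` pairs to `1`
with `A a` and to `0` with the other columns of the `a`-minimal basis. -/
def IsRightTwist (k n : ℕ) (A T : ℤ → Fin k → ℂ) : Prop :=
  ∀ (a : ℤ) (I : Finset ℤ), IsMinBasis k n A a I →
    ∀ b ∈ I, bil k (T a) (A b) = if b = a then 1 else 0

/-- `T` is the left twist `τ←(A)`: for each `a`, the column `T a` pairs to `1`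
with `A a` and to `0` with the other columns of the `a`-maximal basis. -/
def IsLeftTwist (k n : ℕ) (A T : ℤ → Fin k → ℂ) : Prop :=
  ∀ (a : ℤ) (I : Finset ℤ), IsMaxBasis k n A a I →
    ∀ b ∈ I, bil k (T a) (A b) = if b = a then 1 else 0

/-- `Δ_I(A)`, where `I = {i 0 < i 1 < ⋯ < i (k-1)}` is given by a strictly
monotone enumeration `i : Fin k → ℤ`: the determinant of the `k×k` matrix with
columns `A (i 0), …, A (i (k-1))`. -/
noncomputable def Delta (k : ℕ) (A : ℤ → Fin k → ℂ) (i : Fin k → ℤ) : ℂ :=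
  Matrix.det (Matrix.of fun r s : Fin k => A (i s) r)


/-! ### Auxiliary development: the greedy (Gale-minimal) basis -/

section BapAux

open Submodule Set

variable {k n : ℕ} {A : ℤ → Fin k → ℂ}

/-- The greedy basis on the window `[a, a+n)`. -/
noncomputable def grSet (k n : ℕ) (A : ℤ → Fin k → ℂ) (a : ℤ) : Finset ℤ :=
  @Finset.filter _ (fun j => A j ∉ Submodule.span ℂ (A '' Set.Ico a j))
    (Classical.decPred _) (Finset.Ico a (a + (n : ℤ)))

lemma mem_grSet {a j : ℤ} :
    j ∈ grSet k n A a ↔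
      (a ≤ j ∧ j < a + (n : ℤ)) ∧ A j ∉ Submodule.span ℂ (A '' Set.Ico a j) := by
  unfold grSet
  simp only [Finset.mem_filter, Finset.mem_Ico]

/-- The greedy prefix set. -/
def prefSet (A : ℤ → Fin k → ℂ) (a t : ℤ) : Set ℤ :=
  {j | (a ≤ j ∧ j < t) ∧ A j ∉ Submodule.span ℂ (A '' Set.Ico a j)}

lemma coe_grSet (a : ℤ) :
    ((grSet k n A a : Finset ℤ) : Set ℤ) = prefSet A a (a + (n : ℤ)) := by
  ext j; rw [Finset.mem_coe, mem_grSet]; rfl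

lemma prefSet_base (a : ℤ) : prefSet A a a = ∅ := by
  ext j; simp only [prefSet, Set.mem_setOf_eq, Set.mem_empty_iff_false, iff_false]
  rintro ⟨⟨h1, h2⟩, -⟩; omega

lemma prefSet_succ_of_mem {a t : ℤ} (ht : a ≤ t)
    (h : A t ∈ Submodule.span ℂ (A '' Set.Ico a t)) :
    prefSet A a (t + 1) = prefSet A a t := by
  ext j
  simp only [prefSet, Set.mem_setOf_eq]
  constructor
  · rintro ⟨⟨h1, h2⟩, h3⟩
    rcases lt_or_eq_of_le (Int.lt_add_one_iff.mp h2) with h' | h'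
    · exact ⟨⟨h1, h'⟩, h3⟩
    · exact absurd (h' ▸ h) h3
  · rintro ⟨⟨h1, h2⟩, h3⟩; exact ⟨⟨h1, by omega⟩, h3⟩

lemma prefSet_succ_of_not_mem {a t : ℤ} (ht : a ≤ t)
    (h : A t ∉ Submodule.span ℂ (A '' Set.Ico a t)) :
    prefSet A a (t + 1) = insert t (prefSet A a t) := by
  ext j
  simp only [prefSet, Set.mem_setOf_eq, Set.mem_insert_iff]
  constructor
  · rintro ⟨⟨h1, h2⟩, h3⟩
    rcases lt_or_eq_of_le (Int.lt_add_one_iff.mp h2) with h' | h'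
    · exact Or.inr ⟨⟨h1, h'⟩, h3⟩
    · exact Or.inl h'
  · rintro (rfl | ⟨⟨h1, h2⟩, h3⟩)
    · exact ⟨⟨ht, by omega⟩, h⟩
    · exact ⟨⟨h1, by omega⟩, h3⟩

lemma Ico_succ_insert {a t : ℤ} (ht : a ≤ t) :
    Set.Ico a (t + 1) = insert t (Set.Ico a t) := by
  ext x; simp only [Set.mem_Ico, Set.mem_insert_iff]; omega

lemma span_prefSet (a : ℤ) : ∀ t, a ≤ t →
    Submodule.span ℂ (A '' prefSet A a t) = Submodule.span ℂ (A '' Set.Ico a t) := by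
  refine Int.le_induction ?_ ?_
  · rw [prefSet_base, Set.Ico_self]
  · intro t ht ih
    by_cases h : A t ∈ Submodule.span ℂ (A '' Set.Ico a t)
    · rw [prefSet_succ_of_mem ht h, ih, Ico_succ_insert ht, Set.image_insert_eq,
        Submodule.span_insert_eq_span h]
    · rw [prefSet_succ_of_not_mem ht h, Ico_succ_insert ht, Set.image_insert_eq,
        Set.image_insert_eq, Submodule.span_insert, Submodule.span_insert, ih]

lemma injOn_indep_prefSet (a : ℤ) : ∀ t, a ≤ t →
    Set.InjOn A (prefSet A a t) ∧
      LinearIndependent ℂ (fun x : (A '' prefSet A a t) => (x : Fin k → ℂ)) := by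
  refine Int.le_induction ?_ ?_
  · rw [prefSet_base]
    exact ⟨fun x hx => absurd hx (Set.notMem_empty x),
      by rw [Set.image_empty]; exact linearIndependent_empty ℂ _⟩
  · intro t ht ih
    by_cases h : A t ∈ Submodule.span ℂ (A '' Set.Ico a t)
    · rw [prefSet_succ_of_mem ht h]; exact ih
    · rw [prefSet_succ_of_not_mem ht h]
      have hnotspan : A t ∉ Submodule.span ℂ (A '' prefSet A a t) := by
        rw [span_prefSet a t ht]; exact h
      constructor
      · rintro x (rfl | hx) y (rfl | hy) hxy
        · rfl
        · exfalso; apply hnotspan; rw [hxy]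
          exact Submodule.subset_span (Set.mem_image_of_mem A hy)
        · exfalso; apply hnotspan; rw [← hxy]
          exact Submodule.subset_span (Set.mem_image_of_mem A hx)
        · exact ih.1 hx hy hxy
      · rw [Set.image_insert_eq]
        exact LinearIndepOn.id_insert ih.2 hnotspan

theorem linearIndependent_image {ι V : Type*} [AddCommGroup V] [Module ℂ V] {s : Set ι}
    {f : ι → V} (hf : Set.InjOn f s) :
    (LinearIndependent ℂ fun x : s => f x) ↔ LinearIndependent ℂ fun x : f '' s => (x : V) :=
  linearIndepOn_iff_image hf

lemma injOn_of_indep {J : Finset ℤ}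
    (h : LinearIndependent ℂ (fun j : (J : Set ℤ) => A (j : ℤ))) :
    Set.InjOn A (J : Set ℤ) := by
  intro x hx y hy hxy
  have h2 := h.injective (a₁ := ⟨x, hx⟩) (a₂ := ⟨y, hy⟩) hxy
  exact Subtype.ext_iff.mp h2

lemma indep_subset {S T : Finset ℤ} (hST : S ⊆ T)
    (hT : LinearIndependent ℂ (fun x : (T : Set ℤ) => A (x : ℤ))) :
    LinearIndependent ℂ (fun x : (S : Set ℤ) => A (x : ℤ)) := by
  have hsub : (S : Set ℤ) ⊆ (T : Set ℤ) := Finset.coe_subset.mpr hST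
  have hinjT := injOn_of_indep hT
  have hinjS : Set.InjOn A (S : Set ℤ) := hinjT.mono hsub
  rw [linearIndependent_image hinjS]
  exact LinearIndepOn.mono (R := ℂ) (v := (id : (Fin k → ℂ) → Fin k → ℂ)) (t := A '' (S : Set ℤ))
    (s := A '' (T : Set ℤ)) ((linearIndependent_image hinjT).mp hT) (Set.image_mono (f := A) hsub)

lemma card_le_of_span_le {S T : Finset ℤ}
    (hS : LinearIndependent ℂ (fun x : (S : Set ℤ) => A (x : ℤ)))
    (h : Submodule.span ℂ (A '' (S : Set ℤ)) ≤ Submodule.span ℂ (A '' (T : Set ℤ))) :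
    S.card ≤ T.card := by
  classical
  have hinj := injOn_of_indep hS
  have h1 : LinearIndependent ℂ
      (fun x : ((S.image A : Finset (Fin k → ℂ)) : Set (Fin k → ℂ)) => (x : Fin k → ℂ)) := by
    rw [Finset.coe_image]
    exact (linearIndependent_image hinj).mp hS
  have e1 : Module.finrank ℂ
      (Submodule.span ℂ ((S.image A : Finset (Fin k → ℂ)) : Set (Fin k → ℂ))) =
      (S.image A).card := by
    rw [finrank_span_set_eq_card h1]
    simp
  have e2 : Module.finrank ℂ
      (Submodule.span ℂ ((T.image A : Finset (Fin k → ℂ)) : Set (Fin k → ℂ))) ≤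
      (T.image A).card := by
    have := finrank_span_le_card (R := ℂ) ((T.image A : Finset (Fin k → ℂ)) : Set (Fin k → ℂ))
    simpa using this
  have hm : Module.finrank ℂ
      (Submodule.span ℂ ((S.image A : Finset (Fin k → ℂ)) : Set (Fin k → ℂ))) ≤
      Module.finrank ℂ
      (Submodule.span ℂ ((T.image A : Finset (Fin k → ℂ)) : Set (Fin k → ℂ))) := by
    apply Submodule.finrank_mono
    rwa [Finset.coe_image, Finset.coe_image]
  calc S.card = (S.image A).card := (Finset.card_image_of_injOn hinj).symm
    _ ≤ (T.image A).card := by omega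
    _ ≤ T.card := Finset.card_image_le

lemma periodic_all (hper : ColPeriodic k n A) : ∀ (m x : ℤ), A (x + m * (n : ℤ)) = A x := by
  intro m
  induction m using Int.induction_on with
  | zero => simp
  | succ i ih =>
    intro x
    have h1 : x + ((i : ℤ) + 1) * (n : ℤ) = (x + (i : ℤ) * n) + n := by ring
    rw [h1, hper, ih]
  | pred i ih =>
    intro x
    have h1 : (x + (-(i : ℤ) - 1) * (n : ℤ)) + n = x + (-(i : ℤ)) * n := by ring
    calc A (x + (-(i : ℤ) - 1) * (n : ℤ))
        = A ((x + (-(i : ℤ) - 1) * (n : ℤ)) + n) := (hper _).symm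
      _ = A (x + (-(i : ℤ)) * n) := by rw [h1]
      _ = A x := ih x

lemma exists_rep (hper : ColPeriodic k n A) (hn : 0 < n) (a x : ℤ) :
    ∃ y, a ≤ y ∧ y < a + (n : ℤ) ∧ A y = A x := by
  have hn' : (0 : ℤ) < (n : ℤ) := by exact_mod_cast hn
  refine ⟨a + (x - a) % (n : ℤ), ?_, ?_, ?_⟩
  · have := Int.emod_nonneg (x - a) (by omega : (n : ℤ) ≠ 0); omega
  · have := Int.emod_lt_of_pos (x - a) hn'; omega
  · have e : a + (x - a) % (n : ℤ) = x + (-((x - a) / (n : ℤ))) * (n : ℤ) := by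
      rw [Int.emod_def]; ring
    rw [e, periodic_all hper]

lemma span_window_top (hper : ColPeriodic k n A) (hrank : FullRank k A) (hn : 0 < n)
    (a : ℤ) : Submodule.span ℂ (A '' Set.Ico a (a + (n : ℤ))) = ⊤ := by
  rw [eq_top_iff, ← hrank]
  apply Submodule.span_le.mpr
  rintro _ ⟨x, rfl⟩
  obtain ⟨y, h1, h2, h3⟩ := exists_rep hper hn a x
  rw [← h3]
  exact Submodule.subset_span ⟨y, ⟨h1, h2⟩, rfl⟩

lemma grSet_colBasis (hk : 1 ≤ k) (hkn : k ≤ n) (hper : ColPeriodic k n A)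
    (hrank : FullRank k A) (a : ℤ) : IsColBasis k A (grSet k n A a) := by
  classical
  have hn : 0 < n := lt_of_lt_of_le hk hkn
  have hle : a ≤ a + (n : ℤ) := by omega
  have hco := coe_grSet (k := k) (n := n) (A := A) a
  have hii := injOn_indep_prefSet (A := A) a (a + (n : ℤ)) hle
  have hspan : Submodule.span ℂ (A '' ((grSet k n A a : Finset ℤ) : Set ℤ)) = ⊤ := by
    rw [hco, span_prefSet a _ hle, span_window_top hper hrank hn a]
  have hinj : Set.InjOn A ((grSet k n A a : Finset ℤ) : Set ℤ) := by rw [hco]; exact hii.1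
  have hindep : LinearIndependent ℂ
      (fun x : ((grSet k n A a : Finset ℤ) : Set ℤ) => A (x : ℤ)) := by
    rw [linearIndependent_image hinj, hco]
    exact hii.2
  refine ⟨?_, hindep, hspan⟩
  have h1 : LinearIndependent ℂ
      (fun x : (((grSet k n A a).image A : Finset (Fin k → ℂ)) : Set (Fin k → ℂ)) =>
        (x : Fin k → ℂ)) := by
    rw [Finset.coe_image]
    exact (linearIndependent_image hinj).mp hindep
  have e1 : Module.finrank ℂ
      (Submodule.span ℂ (((grSet k n A a).image A : Finset (Fin k → ℂ)) : Set (Fin k → ℂ))) =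
      ((grSet k n A a).image A).card := by
    rw [finrank_span_set_eq_card h1]; simp
  rw [Finset.coe_image, hspan] at e1
  have e2 : Module.finrank ℂ (↥(⊤ : Submodule ℂ (Fin k → ℂ))) = k := by
    rw [finrank_top, Module.finrank_fin_fun]
  rw [e2] at e1
  rw [← Finset.card_image_of_injOn hinj, ← e1]

lemma coe_grSet_filter_lt {a t : ℤ} (h1 : a ≤ t) (h2 : t ≤ a + (n : ℤ)) :
    (((grSet k n A a).filter fun x => x < t : Finset ℤ) :
      Set ℤ) = prefSet A a t := by
  ext j
  rw [Finset.mem_coe, Finset.mem_filter, mem_grSet]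
  simp only [prefSet, Set.mem_setOf_eq]
  constructor
  · rintro ⟨⟨⟨g1, g2⟩, g3⟩, g4⟩; exact ⟨⟨g1, g4⟩, g3⟩
  · rintro ⟨⟨g1, g2⟩, g3⟩; exact ⟨⟨⟨g1, by omega⟩, g3⟩, by omega⟩

lemma grSet_min (hk : 1 ≤ k) (hkn : k ≤ n) (hper : ColPeriodic k n A)
    (hrank : FullRank k A) (a : ℤ) :
    ∀ J : Finset ℤ, J ⊆ Finset.Ico a (a + (n : ℤ)) → IsColBasis k A J →
      galeLE (grSet k n A a) J := by
  classical
  intro J hJsub hJ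
  have hcardG : (grSet k n A a).card = k := (grSet_colBasis hk hkn hper hrank a).1
  refine ⟨hcardG.trans hJ.1.symm, ?_⟩
  have key : ∀ t : ℤ, (J.filter fun x => x < t).card ≤
      ((grSet k n A a).filter fun x => x < t).card := by
    intro t
    by_cases h1 : t ≤ a
    · have : J.filter (fun x => x < t) = ∅ := by
        apply Finset.filter_eq_empty_iff.mpr
        intro x hx
        have := Finset.mem_Ico.mp (hJsub hx)
        omega
      simp [this]
    by_cases h2 : a + (n : ℤ) < t
    · have hJ' : J.filter (fun x => x < t) = J := by
        apply Finset.filter_true_of_mem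
        intro x hx
        have := Finset.mem_Ico.mp (hJsub hx)
        omega
      have hG' : (grSet k n A a).filter (fun x => x < t) = grSet k n A a := by
        apply Finset.filter_true_of_mem
        intro x hx
        have := (mem_grSet.mp hx).1
        omega
      rw [hJ', hG', hcardG, hJ.1]
    · push_neg at h1 h2
      apply card_le_of_span_le (indep_subset (Finset.filter_subset _ J) hJ.2.1)
      have e : (((grSet k n A a).filter fun x => x < t : Finset ℤ) : Set ℤ) =
          prefSet A a t := coe_grSet_filter_lt (le_of_lt h1) h2
      rw [e, span_prefSet a t (le_of_lt h1)]
      apply Submodule.span_mono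
      apply Set.image_mono
      intro x hx
      rw [Finset.mem_coe, Finset.mem_filter] at hx
      have := Finset.mem_Ico.mp (hJsub hx.1)
      exact ⟨this.1, hx.2⟩
  intro t
  have aux : ∀ B : Finset ℤ,
      (B.filter fun x => t ≤ x).card + (B.filter fun x => x < t).card = B.card := by
    intro B
    have := Finset.card_filter_add_card_filter_not (s := B) (p := fun x => t ≤ x)
    simpa only [not_le] using this
  have h1 := aux (grSet k n A a)
  have h2 := aux J
  have h3 := key t
  have h4 : J.card = k := hJ.1
  omega

lemma grSet_isMinBasis (hk : 1 ≤ k) (hkn : k ≤ n) (hper : ColPeriodic k n A)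
    (hrank : FullRank k A) (a : ℤ) : IsMinBasis k n A a (grSet k n A a) :=
  ⟨fun x hx => Finset.mem_Ico.mpr (mem_grSet.mp hx).1, grSet_colBasis hk hkn hper hrank a,
    grSet_min hk hkn hper hrank a⟩

lemma galeLE_antisymm {B C : Finset ℤ} (h1 : galeLE B C) (h2 : galeLE C B) : B = C := by
  classical
  have hcard : ∀ t : ℤ, (B.filter fun x => t ≤ x).card = (C.filter fun x => t ≤ x).card :=
    fun t => le_antisymm (h1.2 t) (h2.2 t)
  have key : ∀ (D : Finset ℤ) (x : ℤ), (D.filter fun y => x ≤ y).card =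
      (D.filter fun y => x + 1 ≤ y).card + (if x ∈ D then 1 else 0) := by
    intro D x
    have hsplit : D.filter (fun y => x ≤ y) =
        D.filter (fun y => x + 1 ≤ y) ∪ D.filter (fun y => y = x) := by
      rw [← Finset.filter_or]
      apply Finset.filter_congr
      intro y _
      constructor
      · intro h; omega
      · intro h; omega
    have hd : Disjoint (D.filter fun y => x + 1 ≤ y) (D.filter fun y => y = x) := by
      rw [Finset.disjoint_left]
      intro y hy1 hy2
      rw [Finset.mem_filter] at hy1 hy2
      omega
    rw [hsplit, Finset.card_union_of_disjoint hd, Finset.filter_eq']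
    by_cases h : x ∈ D <;> simp [h]
  ext x
  have h3 := hcard x
  rw [key B x, key C x, hcard (x + 1)] at h3
  have h4 : (if x ∈ B then 1 else 0) = (if x ∈ C then 1 else 0) := by omega
  by_cases hb : x ∈ B <;> by_cases hc : x ∈ C
  · simp [hb, hc]
  · rw [if_pos hb, if_neg hc] at h4; omega
  · rw [if_neg hb, if_pos hc] at h4; omega
  · simp [hb, hc]

lemma minBasis_eq (hk : 1 ≤ k) (hkn : k ≤ n) (hper : ColPeriodic k n A)
    (hrank : FullRank k A) {a : ℤ} {I : Finset ℤ} (h : IsMinBasis k n A a I) :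
    I = grSet k n A a := by
  have hG := grSet_isMinBasis hk hkn hper hrank a
  exact galeLE_antisymm (h.2.2 _ hG.1 hG.2.1) (hG.2.2 _ h.1 h.2.1)

lemma minBasis_unique {a : ℤ} {I I' : Finset ℤ} (h : IsMinBasis k n A a I)
    (h' : IsMinBasis k n A a I') : I = I' :=
  galeLE_antisymm (h.2.2 _ h'.1 h'.2.1) (h'.2.2 _ h.1 h.2.1)

lemma Ioc_eq_Ico (a r : ℤ) : Set.Ioc a r = Set.Ico (a + 1) (r + 1) := by
  ext x; simp only [Set.mem_Ioc, Set.mem_Ico]; omega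

lemma image_Ioc_shift (hper : ColPeriodic k n A) (a r : ℤ) :
    A '' Set.Ioc (a + (n : ℤ)) (r + (n : ℤ)) = A '' Set.Ioc a r := by
  ext y
  simp only [Set.mem_image, Set.mem_Ioc]
  constructor
  · rintro ⟨x, ⟨h1, h2⟩, rfl⟩
    refine ⟨x - n, ⟨by omega, by omega⟩, ?_⟩
    have := hper (x - n)
    rw [show x - (n : ℤ) + n = x from by ring] at this
    exact this.symm
  · rintro ⟨x, ⟨h1, h2⟩, rfl⟩
    exact ⟨x + n, ⟨by omega, by omega⟩, hper x⟩

lemma pi_shift (hper : ColPeriodic k n A) {π : ℤ → ℤ} (hπ : IsBAP k n A π) (a : ℤ) :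
    π (a + (n : ℤ)) = π a + (n : ℤ) := by
  obtain ⟨h1, h2, h3, h4⟩ := hπ a
  obtain ⟨g1, g2, g3, g4⟩ := hπ (a + (n : ℤ))
  apply le_antisymm
  · apply g4 (π a + n) (by omega) (by omega)
    rw [image_Ioc_shift hper, hper]
    exact h3
  · have g3' := g3
    rw [show π (a + (n : ℤ)) = (π (a + (n : ℤ)) - n) + n from by ring,
      image_Ioc_shift hper, hper] at g3'
    have := h4 (π (a + (n : ℤ)) - n) (by omega) (by omega) g3'
    omega

lemma hmin_lemma {π : ℤ → ℤ} (hπ : IsBAP k n A π) (a j : ℤ) (h1 : a + 1 ≤ j)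
    (h2 : j ≤ π a) : A a ∉ Submodule.span ℂ (A '' Set.Ico (a + 1) j) := by
  intro hmem
  have hb := (hπ a).2.1
  have := (hπ a).2.2.2 (j - 1) (by omega) (by omega)
    (by rw [Ioc_eq_Ico, show j - 1 + 1 = j from by ring]; exact hmem)
  omega

lemma Ico_insert_left {a j : ℤ} (h : a < j) :
    Set.Ico a j = insert a (Set.Ico (a + 1) j) := by
  ext x; simp only [Set.mem_Ico, Set.mem_insert_iff]; omega

lemma Ico_insert_right {a j : ℤ} (h : a ≤ j) :
    Set.Ico a (j + 1) = insert j (Set.Ico a j) := Ico_succ_insert h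

lemma gr_succ_mem (hk : 1 ≤ k) (hkn : k ≤ n) (hper : ColPeriodic k n A)
    {π : ℤ → ℤ} (hπ : IsBAP k n A π) (a : ℤ) (ha : a ∈ grSet k n A a) :
    grSet k n A (a + 1) = insert (π a) ((grSet k n A a).erase a) := by
  have hn : 0 < n := lt_of_lt_of_le hk hkn
  obtain ⟨hp1, hp2, hp3, hp4⟩ := hπ a
  have ha' : A a ∉ Submodule.span ℂ (A '' Set.Ico a a) := (mem_grSet.mp ha).2
  have hane : A a ∉ Submodule.span ℂ (A '' (∅ : Set ℤ)) := by
    rwa [Set.Ico_self] at ha'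
  have hpa : a + 1 ≤ π a := by
    rcases eq_or_lt_of_le hp1 with h | h
    · exfalso
      apply hane
      rw [← h, Set.Ioc_self] at hp3
      exact hp3
    · omega
  have hAmem : A a ∈ Submodule.span ℂ (A '' Set.Ico (a + 1) (π a + 1)) := by
    rw [← Ioc_eq_Ico]; exact hp3
  ext j
  rw [mem_grSet, Finset.mem_insert, Finset.mem_erase, mem_grSet]
  constructor
  · rintro ⟨⟨hj1, hj2⟩, hj3⟩
    rcases lt_trichotomy j (π a) with h | h | h
    · right
      refine ⟨by omega, ⟨by omega, by omega⟩, ?_⟩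
      intro hV
      rw [Ico_insert_left (by omega), Set.image_insert_eq] at hV
      have hx := mem_span_insert_exchange hV hj3
      apply hmin_lemma hπ a (j + 1) (by omega) (by omega)
      have e : Set.Ico (a + 1) (j + 1) = insert j (Set.Ico (a + 1) j) :=
        Ico_insert_right (by omega)
      rw [e, Set.image_insert_eq]
      exact hx
    · exact Or.inl h
    · right
      have hWj : A a ∈ Submodule.span ℂ (A '' Set.Ico (a + 1) j) :=
        Submodule.span_mono (Set.image_mono (f := A) (Set.Ico_subset_Ico le_rfl (by omega))) hAmem
      have hjne : j ≠ a + n := by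
        rintro rfl
        apply hj3
        rw [hper a]
        exact hWj
      refine ⟨by omega, ⟨by omega, by omega⟩, ?_⟩
      intro hV
      apply hj3
      rwa [Ico_insert_left (by omega), Set.image_insert_eq,
        Submodule.span_insert_eq_span hWj] at hV
  · rintro (rfl | ⟨hne, ⟨hj1, hj2⟩, hj3⟩)
    · refine ⟨⟨hpa, by omega⟩, ?_⟩
      intro hW
      apply hmin_lemma hπ a (π a) hpa le_rfl
      have e : Set.Ico (a + 1) (π a + 1) = insert (π a) (Set.Ico (a + 1) (π a)) :=
        Ico_insert_right (by omega)
      rw [e, Set.image_insert_eq, Submodule.span_insert_eq_span hW] at hAmem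
      exact hAmem
    · refine ⟨⟨by omega, by omega⟩, ?_⟩
      intro hW
      apply hj3
      exact Submodule.span_mono
        (Set.image_mono (f := A) (Set.Ico_subset_Ico (by omega) le_rfl)) hW

lemma gr_succ_not_mem (hk : 1 ≤ k) (hkn : k ≤ n) (hper : ColPeriodic k n A)
    (a : ℤ) (ha : a ∉ grSet k n A a) :
    A a = 0 ∧ grSet k n A (a + 1) = grSet k n A a := by
  have hn : 0 < n := lt_of_lt_of_le hk hkn
  have hA0 : A a = 0 := by
    have h2 : A a ∈ Submodule.span ℂ (A '' Set.Ico a a) := by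
      by_contra h
      exact ha (mem_grSet.mpr ⟨⟨le_refl a, by omega⟩, h⟩)
    rwa [Set.Ico_self, Set.image_empty, Submodule.span_empty, Submodule.mem_bot] at h2
  refine ⟨hA0, ?_⟩
  ext j
  rw [mem_grSet, mem_grSet]
  constructor
  · rintro ⟨⟨h1, h2⟩, h3⟩
    have hjne : j ≠ a + n := by
      rintro rfl
      apply h3
      rw [hper a, hA0]
      exact Submodule.zero_mem _
    refine ⟨⟨by omega, by omega⟩, ?_⟩
    intro hV
    apply h3
    rwa [Ico_insert_left (by omega), Set.image_insert_eq, hA0,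
      Submodule.span_insert_eq_span (Submodule.zero_mem _)] at hV
  · rintro ⟨⟨h1, h2⟩, h3⟩
    have hjne : j ≠ a := by
      rintro rfl
      apply h3
      rw [hA0]
      exact Submodule.zero_mem _
    refine ⟨⟨by omega, by omega⟩, ?_⟩
    intro hW
    apply h3
    exact Submodule.span_mono
      (Set.image_mono (f := A) (Set.Ico_subset_Ico (by omega) le_rfl)) hW

end BapAux

/-- the span-minimal rule computes the bounded affine
permutation of the Grassmann necklace: `π (a+n) = π a + n` and
`a ≤ π a ≤ a + n` for all `a`; moreover if `a ∈ I→_a` then, as sets of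
residues mod `n`, `I→_{a+1} = (I→_a \ {a}) ∪ {π a}`, while if `a ∉ I→_a`
then `π a = a` and `I→_{a+1} = I→_a`. -/
theorem bap_of_necklace
    (k n : ℕ) (hk : 1 ≤ k) (hkn : k ≤ n)
    (A : ℤ → Fin k → ℂ) (hper : ColPeriodic k n A) (hrank : FullRank k A)
    (π : ℤ → ℤ) (hπ : IsBAP k n A π) :
    (∀ a : ℤ, π (a + (n : ℤ)) = π a + (n : ℤ)) ∧
    (∀ a : ℤ, a ≤ π a ∧ π a ≤ a + (n : ℤ)) ∧
    (∀ (a : ℤ) (Ia Ia' : Finset ℤ),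
      IsMinBasis k n A a Ia → IsMinBasis k n A (a + 1) Ia' →
      (a ∈ Ia →
        Ia'.image (fun x : ℤ => (x : ZMod n)) =
          insert ((π a : ZMod n))
            ((Ia.erase a).image (fun x : ℤ => (x : ZMod n)))) ∧
      (a ∉ Ia → π a = a ∧
        Ia'.image (fun x : ℤ => (x : ZMod n)) =
          Ia.image (fun x : ℤ => (x : ZMod n)))) := by
  have hn : 0 < n := lt_of_lt_of_le hk hkn
  refine ⟨pi_shift hper hπ, fun a => ⟨(hπ a).1, (hπ a).2.1⟩, ?_⟩
  intro a Ia Ia' hIa hIa'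
  have hEq : Ia = grSet k n A a := minBasis_eq hk hkn hper hrank hIa
  have hEq' : Ia' = grSet k n A (a + 1) := minBasis_eq hk hkn hper hrank hIa'
  constructor
  · intro haIa
    have ha : a ∈ grSet k n A a := by rwa [hEq] at haIa
    have h := gr_succ_mem hk hkn hper hπ a ha
    rw [hEq', h, hEq, Finset.image_insert]
  · intro haIa
    have ha : a ∉ grSet k n A a := by rwa [hEq] at haIa
    obtain ⟨hA0, hG⟩ := gr_succ_not_mem hk hkn hper a ha
    refine ⟨?_, ?_⟩
    · exact le_antisymm ((hπ a).2.2.2 a le_rfl (by omega)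
        (by rw [hA0]; exact Submodule.zero_mem _)) (hπ a).1
    · rw [hEq', hG, hEq]
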